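/- Let n ≥ 1. There exists a permutation σ of {1, …, 2^n} such that for every i, the i-th column of r_{n+1} equals the σ(i)-th column of r_2^{⊗n} (the n-fold Kronecker power of r_2); equivalently, r_{n+1} = r_2^{⊗n} · P for some permutation matrix P. -/

import Mathlib

open Matrix

noncomputable section

/-- Kronecker product of square matrices with flat `Fin` indexing
(first factor most significant: `(A ⊗ B)[i*b+r, j*b+s] = A[i,j] * B[r,s]`). -/
def kron {R : Type*} [Mul R] {a b : ℕ} (A : Matrix (Fin a) (Fin a) R)
    (B : Matrix (Fin b) (Fin b) R) : Matrix (Fin (a * b)) (Fin (a * b)) R := fun i j =>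
  have hb : 0 < b := Nat.pos_of_ne_zero fun hb0 => by
    subst hb0; exact absurd i.isLt (by omega)
  A ⟨i.val / b, Nat.div_lt_of_lt_mul (Nat.mul_comm a b ▸ i.isLt)⟩
    ⟨j.val / b, Nat.div_lt_of_lt_mul (Nat.mul_comm a b ▸ j.isLt)⟩ *
  B ⟨i.val % b, Nat.mod_lt _ hb⟩ ⟨j.val % b, Nat.mod_lt _ hb⟩

/-- Kronecker product of (column) vectors with flat `Fin` indexing. -/
def kronV {R : Type*} [Mul R] {a b : ℕ} (u : Fin a → R) (v : Fin b → R) :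
    Fin (a * b) → R := fun i =>
  have hb : 0 < b := Nat.pos_of_ne_zero fun hb0 => by
    subst hb0; exact absurd i.isLt (by omega)
  u ⟨i.val / b, Nat.div_lt_of_lt_mul (Nat.mul_comm a b ▸ i.isLt)⟩ *
  v ⟨i.val % b, Nat.mod_lt _ hb⟩

/-- Transport a square matrix along an equality of sizes. -/
def castM {R : Type*} {a b : ℕ} (h : a = b) (A : Matrix (Fin a) (Fin a) R) :
    Matrix (Fin b) (Fin b) R := fun i j => A (Fin.cast h.symm i) (Fin.cast h.symm j)

/-- Transport a vector along an equality of sizes. -/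
def castV {R : Type*} {a b : ℕ} (h : a = b) (u : Fin a → R) : Fin b → R :=
  fun i => u (Fin.cast h.symm i)

theorem two_pow_pred_mul_two {n : ℕ} (hn : 1 ≤ n) : 2 ^ (n - 1) * 2 = 2 ^ n := by
  rw [← pow_succ]; congr 1; omega

theorem half_lt {n x : ℕ} (hx : x < 2 ^ n) : x / 2 < 2 ^ (n - 1) := by
  rcases Nat.eq_zero_or_pos n with h | h
  · subst h; simp only [pow_zero] at hx ⊢; omega
  · have h2 : (2 : ℕ) ^ (n - 1) * 2 = 2 ^ n := two_pow_pred_mul_two h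
    omega

/-- `⌊j/2⌋` as an element of `Fin (2^(n-1))`. -/
def half {n : ℕ} (j : Fin (2 ^ n)) : Fin (2 ^ (n - 1)) := ⟨j.val / 2, half_lt j.isLt⟩

/-- The index `2i` (1-indexed: `2i-1`). -/
def dbl {n : ℕ} (hn : 1 ≤ n) (i : Fin (2 ^ (n - 1))) : Fin (2 ^ n) :=
  ⟨2 * i.val, by
    have h1 := i.isLt
    have h2 : (2 : ℕ) ^ (n - 1) * 2 = 2 ^ n := two_pow_pred_mul_two hn
    omega⟩

/-- The index `2i+1` (1-indexed: `2i`). -/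
def dbl1 {n : ℕ} (hn : 1 ≤ n) (i : Fin (2 ^ (n - 1))) : Fin (2 ^ n) :=
  ⟨2 * i.val + 1, by
    have h1 := i.isLt
    have h2 : (2 : ℕ) ^ (n - 1) * 2 = 2 ^ n := two_pow_pred_mul_two hn
    omega⟩

/-- The identity matrix `I_m` over `ℂ`. -/
def idM (m : ℕ) : Matrix (Fin m) (Fin m) ℂ := 1

/-- The 2×2 identity matrix `I_2`. -/
def I2 : Matrix (Fin 2) (Fin 2) ℂ := 1

/-- The Pauli matrix `X = [[0,1],[1,0]]`. -/
def pauliX : Matrix (Fin 2) (Fin 2) ℂ := !![0, 1; 1, 0]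

/-- The projector `π₀ = [[1,0],[0,0]]`. -/
def proj0 : Matrix (Fin 2) (Fin 2) ℂ := !![1, 0; 0, 0]

/-- The projector `π₁ = [[0,0],[0,1]]`. -/
def proj1 : Matrix (Fin 2) (Fin 2) ℂ := !![0, 0; 0, 1]

/-- `D₁(φ) = diag(e^{iφ}, e^{-iφ})`. -/
def D1 (φ : ℝ) : Matrix (Fin 2) (Fin 2) ℂ :=
  !![Complex.exp (Complex.I * (φ : ℂ)), 0; 0, Complex.exp (-(Complex.I * (φ : ℂ)))]

/-- `D_m(α) = diag(e^{iα₁}, …, e^{iα_{2^m}})`. -/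
def Dm (m : ℕ) (α : Fin (2 ^ m) → ℝ) : Matrix (Fin (2 ^ m)) (Fin (2 ^ m)) ℂ :=
  Matrix.diagonal fun j => Complex.exp (Complex.I * (α j : ℂ))

/-- The control matrix
`L(k) = I^{⊗(k-1)} ⊗ π₀ ⊗ I^{⊗(n-k)} + I^{⊗(k-1)} ⊗ π₁ ⊗ I^{⊗(n-k-1)} ⊗ X`
(defined to be the identity for `k` outside `{1,…,n-1}`). -/
def Lmat (n k : ℕ) : Matrix (Fin (2 ^ n)) (Fin (2 ^ n)) ℂ :=
  if h : 1 ≤ k ∧ k < n then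
    castM (by rw [← pow_succ, ← pow_add]; congr 1; omega)
      (kron (kron (idM (2 ^ (k - 1))) proj0) (idM (2 ^ (n - k)))) +
    castM (by rw [← pow_succ, ← pow_add, ← pow_succ]; congr 1; omega)
      (kron (kron (kron (idM (2 ^ (k - 1))) proj1) (idM (2 ^ (n - k - 1)))) pauliX)
  else 1

/-- The half of the binary-tree sequence: `a_2 = (1)`,
`a_m = (a_{m-1}+1) ∘ (1) ∘ (a_{m-1}+1)`. -/
def aSeq : ℕ → List ℕ
  | 0 => []
  | 1 => []
  | 2 => [1]
  | n + 3 => ((aSeq (n + 2)).map (· + 1)) ++ [1] ++ ((aSeq (n + 2)).map (· + 1))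

/-- The binary-tree sequence `A_n = a_n ∘ (1)`. -/
def ASeq (n : ℕ) : List ℕ := aSeq n ++ [1]

/-- The all-ones vector `[1,1]^{⊗k}` (of arbitrary length). -/
def onesV (m : ℕ) : Fin m → ℝ := fun _ => 1

/-- The vector `[1,-1]`. -/
def signV : Fin 2 → ℝ := ![1, -1]

/-- `v_m = [1,1]^{⊗(m-1)} ⊗ [1,-1] ⊗ [1,1]^{⊗(n-1-m)}`
(defined to be all-ones for `m` outside `{1,…,n-1}`). -/
def vvec (n m : ℕ) : Fin (2 ^ (n - 1)) → ℝ :=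
  if h : 1 ≤ m ∧ m ≤ n - 1 then
    castV (by rw [← pow_succ, ← pow_add]; congr 1; omega)
      (kronV (kronV (onesV (2 ^ (m - 1))) signV) (onesV (2 ^ (n - 1 - m))))
  else onesV _

/-- The matrix `r_n`: its `i`-th column is the entrywise product
`∏_{k=1}^{i-1} v_{A_n(k)}`.  (`rMat n j i` is the `(j,i)` entry, `i` the column.) -/
def rMat (n : ℕ) : Matrix (Fin (2 ^ (n - 1))) (Fin (2 ^ (n - 1))) ℝ :=
  fun j i => ∏ k ∈ Finset.range i.val, vvec n ((ASeq n).getD k 1) j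

/-- `r_2 = [[1,1],[1,-1]]`. -/
def r2 : Matrix (Fin 2) (Fin 2) ℝ := !![1, 1; 1, -1]

/-- The `m`-fold Kronecker power `r_2^{⊗m}`. -/
def r2pow : (m : ℕ) → Matrix (Fin (2 ^ m)) (Fin (2 ^ m)) ℝ
  | 0 => 1
  | m + 1 => castM (pow_succ 2 m).symm (kron (r2pow m) r2)

/-- The block-diagonal matrix with 2×2 blocks `D₁(γ₁), …, D₁(γ_{2^{n-1}})`. -/
def blockD1 (n : ℕ) (γ : Fin (2 ^ (n - 1)) → ℝ) :
    Matrix (Fin (2 ^ n)) (Fin (2 ^ n)) ℂ := fun x y =>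
  if x.val / 2 = y.val / 2 then
    D1 (γ (half x)) ⟨x.val % 2, Nat.mod_lt _ (by norm_num)⟩
      ⟨y.val % 2, Nat.mod_lt _ (by norm_num)⟩
  else 0


/-! ### Auxiliary machinery for `stmt7` -/

/-- The Gray code `i ↦ i ^^^ ⌊i/2⌋`. -/
def grayC (i : ℕ) : ℕ := i ^^^ i / 2

lemma xor_left_comm' (a b c : ℕ) : a ^^^ (b ^^^ c) = b ^^^ (a ^^^ c) := by
  rw [← Nat.xor_assoc, Nat.xor_comm a b, Nat.xor_assoc]

lemma xor_div_two' (a b : ℕ) : (a ^^^ b) / 2 = a / 2 ^^^ b / 2 := by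
  apply Nat.eq_of_testBit_eq
  intro k
  simp [Nat.testBit_div_two, Nat.testBit_xor]

lemma grayC_inj : Function.Injective grayC := by
  intro i j h
  unfold grayC at h
  have h0 : (i ^^^ j) ^^^ (i ^^^ j) / 2 = 0 := by
    rw [xor_div_two']
    have hz : (i ^^^ i / 2) ^^^ (j ^^^ j / 2) = 0 := by rw [h, Nat.xor_self]
    rw [← hz]
    simp [Nat.xor_assoc, Nat.xor_comm, xor_left_comm']
  have h1 : i ^^^ j = (i ^^^ j) / 2 := xor_eq_zero_iff.mp h0
  have h2 : i ^^^ j = 0 := by omega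
  exact xor_eq_zero_iff.mp h2

/-- The sign character with `n` bits of fuel. -/
def chi : ℕ → ℕ → ℕ → ℝ
  | 0, _, _ => 1
  | n + 1, j, c => chi n (j / 2) (c / 2) * (if j % 2 = 1 ∧ c % 2 = 1 then -1 else 1)

lemma chi_zero (n j : ℕ) : chi n j 0 = 1 := by
  induction n generalizing j with
  | zero => rfl
  | succ n ih => simp [chi, ih]

lemma mod_two_xor (a b : ℕ) : (a ^^^ b) % 2 = a % 2 ^^^ b % 2 := by
  have h := Nat.testBit_xor a b 0
  simp only [Nat.testBit_eq_decide_div_mod_eq, pow_zero, Nat.div_one] at h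
  rcases Nat.mod_two_eq_zero_or_one a with ha | ha <;>
  rcases Nat.mod_two_eq_zero_or_one b with hb | hb <;>
  rcases Nat.mod_two_eq_zero_or_one (a ^^^ b) with hc | hc <;>
  simp [ha, hb, hc] at h ⊢

lemma chi_xor (n : ℕ) : ∀ j a b, chi n j (a ^^^ b) = chi n j a * chi n j b := by
  induction n with
  | zero => intro j a b; simp [chi]
  | succ n ih =>
    intro j a b
    simp only [chi]
    rw [xor_div_two', ih]
    have h : (if j % 2 = 1 ∧ (a ^^^ b) % 2 = 1 then (-1 : ℝ) else 1)
        = (if j % 2 = 1 ∧ a % 2 = 1 then (-1 : ℝ) else 1) *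
          (if j % 2 = 1 ∧ b % 2 = 1 then (-1 : ℝ) else 1) := by
      rw [mod_two_xor]
      rcases Nat.mod_two_eq_zero_or_one j with hj | hj <;>
      rcases Nat.mod_two_eq_zero_or_one a with ha | ha <;>
      rcases Nat.mod_two_eq_zero_or_one b with hb | hb <;>
      simp [hj, ha, hb]
    rw [h]; ring

lemma chi_two_pow (n : ℕ) : ∀ p j, p < n →
    chi n j (2 ^ p) = if j / 2 ^ p % 2 = 1 then -1 else 1 := by
  induction n with
  | zero => intro p j h; omega
  | succ n ih =>
    intro p j hp
    cases p with
    | zero =>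
      simp only [chi, pow_zero, Nat.div_one]
      norm_num [chi_zero]
    | succ p =>
      have h1 : 2 ^ (p + 1) / 2 = 2 ^ p := by
        rw [pow_succ]; exact Nat.mul_div_cancel _ (by norm_num)
      have h2 : 2 ^ (p + 1) % 2 = 0 := by rw [pow_succ]; simp
      simp only [chi, h1, h2]
      rw [ih p (j / 2) (by omega)]
      have h3 : j / 2 / 2 ^ p = j / 2 ^ (p + 1) := by
        rw [Nat.div_div_eq_div_mul, pow_succ, mul_comm]
      rw [h3]
      simp

lemma r2_entry (a b : ℕ) (ha : a < 2) (hb : b < 2) :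
    r2 ⟨a, ha⟩ ⟨b, hb⟩ = if a = 1 ∧ b = 1 then -1 else 1 := by
  interval_cases a <;> interval_cases b <;> simp [r2]

lemma r2pow_eq_chi : ∀ n (j c : Fin (2 ^ n)), r2pow n j c = chi n j.val c.val := by
  intro n
  induction n with
  | zero =>
    intro j c
    have hj : j = c := Fin.ext (by have h1 := j.isLt; have h2 := c.isLt; simp at h1 h2; omega)
    rw [hj]
    simp [r2pow, chi, Matrix.one_apply_eq]
  | succ n ih =>
    intro j c
    show castM _ (kron (r2pow n) r2) j c = _
    simp only [castM, kron]
    rw [ih, r2_entry]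
    rfl

lemma signV_mk (a : ℕ) (h : a < 2) : signV ⟨a, h⟩ = if a = 1 then -1 else 1 := by
  interval_cases a <;> simp [signV]

lemma vvec_eq (n m : ℕ) (hm1 : 1 ≤ m) (hm2 : m ≤ n) (j : Fin (2 ^ n)) :
    vvec (n + 1) m j = chi n j.val (2 ^ (n - m)) := by
  unfold vvec
  rw [dif_pos (show 1 ≤ m ∧ m ≤ n + 1 - 1 by omega)]
  simp only [castV, kronV, onesV, one_mul, mul_one, Fin.coe_cast, Nat.add_sub_cancel]
  rw [chi_two_pow n (n - m) j.val (by omega)]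
  rw [signV_mk]

lemma aSeq_bounds : ∀ m, ∀ x ∈ aSeq m, 1 ≤ x ∧ x < m
  | 0 => by simp [aSeq]
  | 1 => by simp [aSeq]
  | 2 => by intro x hx; simp only [aSeq, List.mem_singleton] at hx; omega
  | n + 3 => by
    intro x hx
    simp only [aSeq, List.mem_append, List.mem_map, List.mem_singleton] at hx
    rcases hx with (⟨y, hy, rfl⟩ | rfl) | ⟨y, hy, rfl⟩
    · have := aSeq_bounds (n + 2) y hy; omega
    · omega
    · have := aSeq_bounds (n + 2) y hy; omega

lemma aSeq_length : ∀ m, (aSeq (m + 2)).length = 2 ^ (m + 1) - 1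
  | 0 => rfl
  | n + 1 => by
    show (aSeq (n + 3)).length = 2 ^ (n + 2) - 1
    simp only [aSeq, List.length_append, List.length_map, List.length_singleton,
      aSeq_length n]
    have h : 2 ^ (n + 2) = 2 * 2 ^ (n + 1) := by ring
    have h2 : 1 ≤ 2 ^ (n + 1) := Nat.one_le_pow _ _ (by norm_num)
    omega

/-- Prefix-xor bookkeeping. -/
def xList (n : ℕ) (L : List ℕ) : ℕ := (L.map fun m => 2 ^ (n - m)).foldr (· ^^^ ·) 0

lemma foldr_xor (L : List ℕ) (c : ℕ) :
    L.foldr (· ^^^ ·) c = L.foldr (· ^^^ ·) 0 ^^^ c := by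
  induction L with
  | nil => simp
  | cons a L ih => simp [List.foldr_cons, ih, Nat.xor_assoc]

lemma xList_append (n : ℕ) (L1 L2 : List ℕ) :
    xList n (L1 ++ L2) = xList n L1 ^^^ xList n L2 := by
  unfold xList
  rw [List.map_append, List.foldr_append, foldr_xor]

lemma xList_map (n : ℕ) (L : List ℕ) : xList (n + 1) (L.map (· + 1)) = xList n L := by
  unfold xList
  rw [List.map_map]
  have h : ((fun m => 2 ^ (n + 1 - m)) ∘ (· + 1)) = fun m : ℕ => 2 ^ (n - m) := by
    funext m; simp only [Function.comp]; congr 1; omega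
  rw [h]

lemma two_pow_xor_of_lt {a b : ℕ} (h : b < 2 ^ a) : 2 ^ a ^^^ b = 2 ^ a + b := by
  apply Nat.eq_of_testBit_eq
  intro i
  rcases lt_trichotomy i a with hi | rfl | hi
  · rw [Nat.testBit_xor, Nat.testBit_two_pow_of_ne (by omega), Nat.testBit_two_pow_add_gt hi]
    simp
  · rw [Nat.testBit_xor, Nat.testBit_two_pow_self, Nat.testBit_two_pow_add_eq,
      Nat.testBit_lt_two_pow h]
    simp
  · have ha1 : 2 ^ a + b < 2 ^ (a + 1) := by rw [pow_succ]; omega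
    have hlt : 2 ^ a + b < 2 ^ i :=
      lt_of_lt_of_le ha1 (Nat.pow_le_pow_right (by norm_num) hi)
    have hb : b < 2 ^ i := lt_of_lt_of_le h (Nat.pow_le_pow_right (by norm_num) (le_of_lt hi))
    rw [Nat.testBit_xor, Nat.testBit_two_pow_of_ne (by omega), Nat.testBit_lt_two_pow hlt,
      Nat.testBit_lt_two_pow hb]
    simp

lemma grayC_two_pow_sub_one (k : ℕ) : grayC (2 ^ (k + 1) - 1) = 2 ^ k := by
  unfold grayC
  have h2 : 2 ^ (k + 1) = 2 * 2 ^ k := by ring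
  have h1 : 1 ≤ 2 ^ k := Nat.one_le_pow _ _ (by norm_num)
  have hdiv : (2 ^ (k + 1) - 1) / 2 = 2 ^ k - 1 := by omega
  rw [hdiv]
  have hsplit : 2 ^ (k + 1) - 1 = 2 ^ k ^^^ (2 ^ k - 1) := by
    rw [two_pow_xor_of_lt (by omega)]; omega
  rw [hsplit, Nat.xor_assoc, Nat.xor_self, Nat.xor_zero]

lemma grayC_add (k t : ℕ) (ht : t < 2 ^ (k + 1)) :
    grayC (2 ^ (k + 1) + t) = grayC (2 ^ (k + 1) - 1) ^^^ (2 ^ (k + 1) ^^^ grayC t) := by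
  rw [grayC_two_pow_sub_one]
  unfold grayC
  have h2 : 2 ^ (k + 1) = 2 * 2 ^ k := by ring
  have hdiv : (2 ^ (k + 1) + t) / 2 = 2 ^ k + t / 2 := by omega
  rw [hdiv, ← two_pow_xor_of_lt ht, ← two_pow_xor_of_lt (show t / 2 < 2 ^ k by omega)]
  simp [Nat.xor_assoc, Nat.xor_comm, xor_left_comm']

lemma xList_aSeq : ∀ n, ∀ i ≤ 2 ^ n - 1, xList n ((aSeq (n + 1)).take i) = grayC i
  | 0 => by
    intro i hi
    interval_cases i
    simp [aSeq, xList, grayC]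
  | 1 => by
    intro i hi
    interval_cases i
    · simp [xList, grayC]
    · show xList 1 ((aSeq 2).take 1) = grayC 1
      simp [aSeq, xList, grayC]
  | k + 2 => by
    intro i hi
    have ih := xList_aSeq (k + 1)
    have hlen : (aSeq (k + 2)).length = 2 ^ (k + 1) - 1 := aSeq_length k
    have hlenM : ((aSeq (k + 2)).map (· + 1)).length = 2 ^ (k + 1) - 1 := by
      simp [hlen]
    have hlen' : (aSeq (k + 1 + 1)).length = 2 ^ (k + 1) - 1 := aSeq_length k
    have h2 : 2 ^ (k + 2) = 2 * 2 ^ (k + 1) := by ring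
    have h1 : 1 ≤ 2 ^ (k + 1) := Nat.one_le_pow _ _ (by norm_num)
    show xList (k + 2) ((aSeq (k + 3)).take i) = grayC i
    by_cases hcase : i ≤ 2 ^ (k + 1) - 1
    · have htake : (aSeq (k + 3)).take i = ((aSeq (k + 2)).map (· + 1)).take i := by
        simp only [aSeq]
        rw [List.append_assoc, List.take_append]
        have hz : i - ((aSeq (k + 2)).map (· + 1)).length = 0 := by omega
        rw [hz]
        simp
      rw [htake, ← List.map_take, xList_map]
      exact ih i (by omega)
    · have hts : 2 ^ (k + 1) ≤ i := by omega
      obtain ⟨t, rfl⟩ : ∃ t, i = 2 ^ (k + 1) + t := ⟨i - 2 ^ (k + 1), by omega⟩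
      have htake : (aSeq (k + 3)).take (2 ^ (k + 1) + t)
          = (((aSeq (k + 2)).map (· + 1)) ++ [1]) ++
            ((aSeq (k + 2)).map (· + 1)).take t := by
        simp only [aSeq]
        rw [List.take_append]
        rw [List.take_of_length_le (by
          simp only [List.length_append, List.length_singleton, List.length_map, hlenM,
            hlen']; omega)]
        congr 2
        simp only [List.length_append, List.length_singleton, List.length_map, hlenM, hlen']
        omega
      rw [htake, xList_append, xList_append]
      have hM : xList (k + 2) ((aSeq (k + 2)).map (· + 1)) = grayC (2 ^ (k + 1) - 1) := by
        rw [xList_map, ← ih (2 ^ (k + 1) - 1) (le_refl _),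
          List.take_of_length_le (by omega)]
      have hMt : xList (k + 2) (((aSeq (k + 2)).map (· + 1)).take t)
          = grayC t := by
        rw [← List.map_take, xList_map]
        exact ih _ (by omega)
      have hmid : xList (k + 2) [1] = 2 ^ (k + 1) := by
        simp [xList]
      rw [hM, hmid, hMt, grayC_add k t (by omega), Nat.xor_assoc]

lemma rMat_eq (n : ℕ) (i j : Fin (2 ^ n)) :
    rMat (n + 1) j i = chi n j.val (grayC i.val) := by
  have hlen : (aSeq (n + 1)).length = 2 ^ n - 1 := by
    cases n with
    | zero => rfl
    | succ k => exact aSeq_length k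
  rw [← xList_aSeq n i.val (by have := i.isLt; omega)]
  show (∏ k ∈ Finset.range i.val, vvec (n + 1) ((ASeq (n + 1)).getD k 1) j) = _
  have key : ∀ i' ≤ 2 ^ n - 1,
      (∏ k ∈ Finset.range i', vvec (n + 1) ((ASeq (n + 1)).getD k 1) j)
        = chi n j.val (xList n ((aSeq (n + 1)).take i')) := by
    intro i'
    induction i' with
    | zero => intro _; simp [xList, chi_zero]
    | succ m ihm =>
      intro hm
      rw [Finset.prod_range_succ, ihm (by omega)]
      have hmlt : m < (aSeq (n + 1)).length := by omega
      have hget : (ASeq (n + 1)).getD m 1 = (aSeq (n + 1)).getD m 1 := by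
        unfold ASeq; exact List.getD_append _ _ _ _ hmlt
      have hgetE : (aSeq (n + 1)).getD m 1 = (aSeq (n + 1))[m] :=
        List.getD_eq_getElem _ _ hmlt
      have hmem : (aSeq (n + 1)).getD m 1 ∈ aSeq (n + 1) := by
        rw [hgetE]; exact List.getElem_mem _
      have hbd := aSeq_bounds (n + 1) _ hmem
      have htake : (aSeq (n + 1)).take (m + 1)
          = (aSeq (n + 1)).take m ++ [(aSeq (n + 1)).getD m 1] := by
        rw [List.take_succ, List.getElem?_eq_getElem hmlt]
        rw [hgetE]
        rfl
      rw [htake, xList_append, chi_xor]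
      have hx1 : xList n [(aSeq (n + 1)).getD m 1]
          = 2 ^ (n - (aSeq (n + 1)).getD m 1) := by
        simp [xList]
      rw [hx1, hget, vvec_eq n _ (by omega) (by omega) j]
  exact key i.val (by have := i.isLt; omega)

theorem stmt7 (n : ℕ) (hn : 1 ≤ n) :
    ∃ σ : Equiv.Perm (Fin (2 ^ n)), ∀ i j : Fin (2 ^ n),
      rMat (n + 1) j i = r2pow n j (σ i) := by
  have hlt : ∀ i : Fin (2 ^ n), grayC i.val < 2 ^ n := fun i =>
    Nat.xor_lt_two_pow i.isLt (lt_of_le_of_lt (Nat.div_le_self _ _) i.isLt)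
  have hinj : Function.Injective (fun i : Fin (2 ^ n) => (⟨grayC i.val, hlt i⟩ : Fin (2 ^ n))) := by
    intro a b hab
    have h : grayC a.val = grayC b.val := congrArg Fin.val hab
    exact Fin.val_injective (grayC_inj h)
  refine ⟨Equiv.ofBijective _ (Finite.injective_iff_bijective.mp hinj), fun i j => ?_⟩
  rw [rMat_eq n i j, r2pow_eq_chi]
  rfl

end
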